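/- arXiv:1806.09087 — 2 statements merged into one kernel-verified Lean document; each statement's English description precedes it below -/
import Mathlib

section
/- Let A and B be positive semi-definite d×d real matrices with ker(A) ⊆ ker(B). Then Tr((√A − √B)²) ≤ Tr((A − B)² A†), where √· denotes the positive semi-definite square root and A† the Moore–Penrose pseudoinverse of A. -/
open Matrix

/-- `P` is the Moore–Penrose pseudoinverse of `A`. -/
def IsMoorePenroseInv {d : ℕ} (A P : Matrix (Fin d) (Fin d) ℝ) : Prop :=
  A * P * A = A ∧ P * A * P = P ∧ (A * P).IsSymm ∧ (P * A).IsSymm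

/-- The square root of a positive semidefinite matrix, as `Matrix.PosSemidef.sqrt` was defined
in the older Mathlib. -/
noncomputable def posSemidefSqrt {d : ℕ} {A : Matrix (Fin d) (Fin d) ℝ} (hA : A.PosSemidef) :
    Matrix (Fin d) (Fin d) ℝ :=
  hA.1.eigenvectorUnitary.1 * Matrix.diagonal ((↑) ∘ (√·) ∘ hA.1.eigenvalues) *
    (star hA.1.eigenvectorUnitary : Matrix (Fin d) (Fin d) ℝ)

namespace MPAux

variable {d : ℕ} {A : Matrix (Fin d) (Fin d) ℝ}

lemma conjT (M : Matrix (Fin d) (Fin d) ℝ) : Mᴴ = Mᵀ :=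
  conjTranspose_eq_transpose_of_trivial M

lemma mp_unique {A P₁ P₂ : Matrix (Fin d) (Fin d) ℝ}
    (h₁ : IsMoorePenroseInv A P₁) (h₂ : IsMoorePenroseInv A P₂) :
    P₁ = P₂ := by
  obtain ⟨a1, b1, c1, d1⟩ := h₁
  obtain ⟨a2, b2, c2, d2⟩ := h₂
  have hAP : A * P₁ = A * P₂ := by
    calc A * P₁ = (A * P₁)ᵀ := c1.symm
      _ = P₁ᵀ * Aᵀ := by rw [transpose_mul]
      _ = P₁ᵀ * (A * P₂ * A)ᵀ := by rw [a2]
      _ = P₁ᵀ * (Aᵀ * (A * P₂)ᵀ) := by rw [transpose_mul]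
      _ = P₁ᵀ * (Aᵀ * (A * P₂)) := by rw [c2]
      _ = (P₁ᵀ * Aᵀ) * (A * P₂) := by rw [mul_assoc]
      _ = (A * P₁)ᵀ * (A * P₂) := by rw [transpose_mul]
      _ = (A * P₁) * (A * P₂) := by rw [c1]
      _ = (A * P₁ * A) * P₂ := by simp only [mul_assoc]
      _ = A * P₂ := by rw [a1]
  have hPA : P₁ * A = P₂ * A := by
    calc P₁ * A = (P₁ * A)ᵀ := d1.symm
      _ = Aᵀ * P₁ᵀ := by rw [transpose_mul]
      _ = (A * P₂ * A)ᵀ * P₁ᵀ := by rw [a2]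
      _ = ((P₂ * A)ᵀ * Aᵀ) * P₁ᵀ := by rw [transpose_mul, transpose_mul]; simp [mul_assoc]
      _ = ((P₂ * A) * Aᵀ) * P₁ᵀ := by rw [d2]
      _ = (P₂ * A) * (Aᵀ * P₁ᵀ) := by rw [mul_assoc]
      _ = (P₂ * A) * (P₁ * A)ᵀ := by rw [transpose_mul]
      _ = (P₂ * A) * (P₁ * A) := by rw [d1]
      _ = P₂ * (A * P₁ * A) := by simp only [mul_assoc]
      _ = P₂ * A := by rw [a1]
  calc P₁ = P₁ * A * P₁ := b1.symm
    _ = P₁ * (A * P₁) := by rw [mul_assoc]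
    _ = P₁ * (A * P₂) := by rw [hAP]
    _ = (P₁ * A) * P₂ := by rw [mul_assoc]
    _ = (P₂ * A) * P₂ := by rw [hPA]
    _ = P₂ := b2

lemma eq_zero_of_mulVec {M : Matrix (Fin d) (Fin d) ℝ}
    (h : ∀ x, M.mulVec x = 0) : M = 0 := by
  ext i j
  have := congrFun (h (Pi.single j 1)) i
  simpa [Matrix.mulVec_single] using this

lemma eq_zero_of_mul_transpose_self {M : Matrix (Fin d) (Fin d) ℝ}
    (h : M * Mᵀ = 0) : M = 0 := by
  have h' : M * Mᴴ = 0 := by rw [conjT]; exact h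
  exact Matrix.self_mul_conjTranspose_eq_zero.mp h'

lemma trace_nonneg {M : Matrix (Fin d) (Fin d) ℝ} (hM : M.PosSemidef) :
    0 ≤ M.trace := by
  exact hM.trace_nonneg

/-- Functional calculus for a Hermitian real matrix. -/
noncomputable def phi (hH : A.IsHermitian) (f : ℝ → ℝ) : Matrix (Fin d) (Fin d) ℝ :=
  (hH.eigenvectorUnitary : Matrix (Fin d) (Fin d) ℝ) * Matrix.diagonal (f ∘ hH.eigenvalues) *
    (star (hH.eigenvectorUnitary : Matrix (Fin d) (Fin d) ℝ))

lemma phi_mul (hH : A.IsHermitian) (f g : ℝ → ℝ) :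
    phi hH f * phi hH g = phi hH (fun x => f x * g x) := by
  unfold phi
  have h1 : (star (hH.eigenvectorUnitary : Matrix (Fin d) (Fin d) ℝ)) *
      (hH.eigenvectorUnitary : Matrix (Fin d) (Fin d) ℝ) = 1 :=
    Unitary.coe_star_mul_self hH.eigenvectorUnitary
  simp only [Matrix.mul_assoc]
  rw [← Matrix.mul_assoc (star (hH.eigenvectorUnitary : Matrix (Fin d) (Fin d) ℝ))
      (hH.eigenvectorUnitary : Matrix (Fin d) (Fin d) ℝ), h1, Matrix.one_mul,
      ← Matrix.mul_assoc (Matrix.diagonal (f ∘ hH.eigenvalues)), Matrix.diagonal_mul_diagonal]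
  rfl

lemma phi_isHermitian (hH : A.IsHermitian) (f : ℝ → ℝ) : (phi hH f).IsHermitian := by
  unfold phi
  simp only [Matrix.IsHermitian, Matrix.conjTranspose_mul, Matrix.conjTranspose_conjTranspose,
    Matrix.diagonal_conjTranspose, Matrix.star_eq_conjTranspose]
  simp [Matrix.mul_assoc, star_trivial]

lemma phi_isSymm (hH : A.IsHermitian) (f : ℝ → ℝ) : (phi hH f).IsSymm := by
  have h := phi_isHermitian hH f
  rwa [Matrix.IsHermitian, conjT] at h

lemma phi_transpose (hH : A.IsHermitian) (f : ℝ → ℝ) : (phi hH f)ᵀ = phi hH f :=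
  phi_isSymm hH f

lemma phi_congr (hH : A.IsHermitian) {f g : ℝ → ℝ}
    (h : ∀ i, f (hH.eigenvalues i) = g (hH.eigenvalues i)) : phi hH f = phi hH g := by
  have hfg : f ∘ hH.eigenvalues = g ∘ hH.eigenvalues := by
    funext i
    exact h i
  unfold phi
  rw [hfg]

lemma phi_posSemidef (hH : A.IsHermitian) {f : ℝ → ℝ} (hf : ∀ x, 0 ≤ f x) :
    (phi hH f).PosSemidef := by
  unfold phi
  rw [Matrix.star_eq_conjTranspose]
  exact (Matrix.posSemidef_diagonal_iff.mpr fun i => hf _).mul_mul_conjTranspose_same _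

lemma phi_id (hH : A.IsHermitian) : phi hH (fun x => x) = A := by
  unfold phi
  conv_rhs => rw [hH.spectral_theorem, Unitary.conjStarAlgAut_apply]
  congr 2

lemma phi_sqrt (hA : A.PosSemidef) : posSemidefSqrt hA = phi hA.1 Real.sqrt := by
  unfold phi posSemidefSqrt
  congr 2

lemma mpsqrt_mul_self (hA : A.PosSemidef) : posSemidefSqrt hA * posSemidefSqrt hA = A := by
  rw [phi_sqrt hA, phi_mul]
  conv_rhs => rw [← phi_id hA.1]
  apply phi_congr
  intro i
  exact Real.mul_self_sqrt (hA.eigenvalues_nonneg i)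

lemma mpsqrt_psd (hA : A.PosSemidef) : (posSemidefSqrt hA).PosSemidef := by
  rw [phi_sqrt hA]
  exact phi_posSemidef hA.1 Real.sqrt_nonneg

lemma trace_mul_nonneg {M N : Matrix (Fin d) (Fin d) ℝ}
    (hM : M.PosSemidef) (hN : N.PosSemidef) : 0 ≤ (M * N).trace := by
  have h2 : (M * N).trace = (posSemidefSqrt hM * N * posSemidefSqrt hM).trace := by
    calc (M * N).trace = (posSemidefSqrt hM * posSemidefSqrt hM * N).trace := by rw [mpsqrt_mul_self hM]
      _ = (posSemidefSqrt hM * N * posSemidefSqrt hM).trace := (Matrix.trace_mul_cycle _ _ _).symm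
  rw [h2]
  have h := hN.conjTranspose_mul_mul_same (posSemidefSqrt hM)
  rw [(mpsqrt_psd hM).1.eq] at h
  exact trace_nonneg h


/-- `finv` : pointwise `x ↦ (√x)⁻¹` on the support. -/
noncomputable def finv (x : ℝ) : ℝ := if x = 0 then 0 else (Real.sqrt x)⁻¹

/-- indicator of the support -/
noncomputable def pind (x : ℝ) : ℝ := if x = 0 then 0 else 1

end MPAux

open MPAux

/-- Lemma 2.2: if `A, B` are PSD with `ker A ⊆ ker B`, then
`Tr((√A − √B)²) ≤ Tr((A − B)² A†)`. -/
theorem stmt0 {d : ℕ} (A B : Matrix (Fin d) (Fin d) ℝ)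
    (hA : A.PosSemidef) (hB : B.PosSemidef)
    (hker : ∀ x : Fin d → ℝ, A.mulVec x = 0 → B.mulVec x = 0)
    (Ap : Matrix (Fin d) (Fin d) ℝ) (hAp : IsMoorePenroseInv A Ap) :
    ((posSemidefSqrt hA - posSemidefSqrt hB) ^ 2).trace ≤ ((A - B) ^ 2 * Ap).trace := by
  have hH : A.IsHermitian := hA.1
  have hμ : ∀ i, 0 ≤ hH.eigenvalues i := hA.eigenvalues_nonneg
  set Q : Matrix (Fin d) (Fin d) ℝ := phi hH finv with hQdef
  set P : Matrix (Fin d) (Fin d) ℝ := phi hH pind with hPdef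
  set Ap₀ : Matrix (Fin d) (Fin d) ℝ := phi hH (fun x => finv x * finv x) with hApdef
  have hQQ : Q * Q = Ap₀ := phi_mul hH finv finv
  have hAphi : A = phi hH (fun x => x) := (phi_id hH).symm
  -- pointwise facts
  have hfs : ∀ i, 0 < hH.eigenvalues i → Real.sqrt (hH.eigenvalues i) ≠ 0 := by
    intro i hi
    exact ne_of_gt (Real.sqrt_pos.mpr hi)
  -- A * Ap₀ = P and Ap₀ * A = P
  have hAAp : A * Ap₀ = P := by
    rw [hAphi, hApdef, phi_mul hH]
    apply phi_congr
    intro i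
    rcases eq_or_lt_of_le (hμ i) with h0 | hpos
    · simp [finv, pind, ← h0]
    · have hx : hH.eigenvalues i ≠ 0 := ne_of_gt hpos
      have hs := hfs i hpos
      have hss : Real.sqrt (hH.eigenvalues i) * Real.sqrt (hH.eigenvalues i)
          = hH.eigenvalues i := Real.mul_self_sqrt (hμ i)
      simp only [finv, pind, if_neg hx]
      field_simp
      rw [Real.sq_sqrt (hμ i)]
  have hApA : Ap₀ * A = P := by
    rw [hAphi, hApdef, phi_mul hH]
    apply phi_congr
    intro i
    rcases eq_or_lt_of_le (hμ i) with h0 | hpos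
    · simp [finv, pind, ← h0]
    · have hx : hH.eigenvalues i ≠ 0 := ne_of_gt hpos
      have hs := hfs i hpos
      have hss : Real.sqrt (hH.eigenvalues i) * Real.sqrt (hH.eigenvalues i)
          = hH.eigenvalues i := Real.mul_self_sqrt (hμ i)
      simp only [finv, pind, if_neg hx]
      field_simp
      rw [Real.sq_sqrt (hμ i)]
  have hPA : P * A = A := by
    rw [hAphi, hPdef, phi_mul hH]
    apply phi_congr
    intro i
    by_cases hx : hH.eigenvalues i = 0 <;> simp [pind, hx]
  have hAP : A * P = A := by
    rw [hAphi, hPdef, phi_mul hH]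
    apply phi_congr
    intro i
    by_cases hx : hH.eigenvalues i = 0 <;> simp [pind, hx]
  -- Ap₀ is a Moore-Penrose inverse of A
  have hMP₀ : IsMoorePenroseInv A Ap₀ := by
    refine ⟨?_, ?_, ?_, ?_⟩
    · rw [hAAp, hPA]
    · rw [mul_assoc, hAAp]
      rw [hApdef, hPdef, phi_mul hH]
      apply phi_congr
      intro i
      by_cases hx : hH.eigenvalues i = 0 <;> simp [pind, finv, hx]
    · rw [hAAp]; exact phi_isSymm hH pind
    · rw [hApA]; exact phi_isSymm hH pind
  have hApEq : Ap = Ap₀ := mp_unique hAp hMP₀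
  -- notation for square roots
  set X : Matrix (Fin d) (Fin d) ℝ := posSemidefSqrt hA with hXdef
  set Y : Matrix (Fin d) (Fin d) ℝ := posSemidefSqrt hB with hYdef
  have hXphi : X = phi hH Real.sqrt := phi_sqrt hA
  have hXX : X * X = A := mpsqrt_mul_self hA
  have hYY : Y * Y = B := mpsqrt_mul_self hB
  have hXt : Xᵀ = X := by rw [← conjT]; exact (mpsqrt_psd hA).1
  have hYt : Yᵀ = Y := by rw [← conjT]; exact (mpsqrt_psd hB).1
  have hQt : Qᵀ = Q := phi_transpose hH finv
  have hPt : Pᵀ = P := phi_transpose hH pind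
  have hQpsd : Q.PosSemidef := by
    apply phi_posSemidef
    intro x
    unfold finv
    split
    · exact le_refl 0
    · positivity
  -- Q * X = P
  have hQX : Q * X = P := by
    rw [hXphi, hQdef, phi_mul hH]
    apply phi_congr
    intro i
    rcases eq_or_lt_of_le (hμ i) with h0 | hpos
    · simp [finv, pind, ← h0]
    · have hx : hH.eigenvalues i ≠ 0 := ne_of_gt hpos
      have hs := hfs i hpos
      simp only [finv, pind, if_neg hx]
      field_simp
  -- P * X = X
  have hPX : P * X = X := by
    rw [hXphi, hPdef, phi_mul hH]
    apply phi_congr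
    intro i
    by_cases hx : hH.eigenvalues i = 0 <;> simp [pind, hx]
  -- B * P = B and P * B = B  (uses the kernel inclusion)
  have hB1P : B * (1 - P) = 0 := by
    apply eq_zero_of_mulVec
    intro x
    have hAx : A.mulVec ((1 - P).mulVec x) = 0 := by
      rw [Matrix.mulVec_mulVec]
      have : A * (1 - P) = 0 := by rw [Matrix.mul_sub, Matrix.mul_one, hAP, sub_self]
      rw [this, Matrix.zero_mulVec]
    have := hker _ hAx
    rwa [Matrix.mulVec_mulVec] at this
  have hBP : B * P = B := by
    have := hB1P
    rw [Matrix.mul_sub, Matrix.mul_one, sub_eq_zero] at this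
    exact this.symm
  have hPB : P * B = B := by
    have hBt : Bᵀ = B := by rw [← conjT]; exact hB.1
    calc P * B = Pᵀ * Bᵀ := by rw [hPt, hBt]
      _ = (B * P)ᵀ := by rw [transpose_mul]
      _ = Bᵀ := by rw [hBP]
      _ = B := hBt
  -- P * Y = Y
  have hPY : P * Y = Y := by
    have hexp : (Y - P * Y) * (Y - P * Y)ᵀ = 0 := by
      have ht : (Y - P * Y)ᵀ = Y - Y * P := by
        rw [transpose_sub, transpose_mul, hPt, hYt]
      rw [ht]
      have hexpand : (Y - P * Y) * (Y - Y * P)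
          = Y * Y - Y * Y * P - (P * (Y * Y) - P * (Y * Y) * P) := by noncomm_ring
      rw [hexpand, hYY, hBP, hPB, hBP, sub_self]
    have := eq_zero_of_mul_transpose_self hexp
    rw [sub_eq_zero] at this
    exact this.symm
  -- the decomposition
  set D : Matrix (Fin d) (Fin d) ℝ := X - Y with hDdef
  set E : Matrix (Fin d) (Fin d) ℝ := Q * D * Y with hEdef
  have hDt : Dᵀ = D := by rw [hDdef, transpose_sub, hXt, hYt]
  have hPD : P * D = D := by rw [hDdef, Matrix.mul_sub, hPX, hPY]
  have hMdec : A - B = X * D + D * Y := by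
    have : X * D + D * Y = X * X - Y * Y := by rw [hDdef]; noncomm_ring
    rw [this, hXX, hYY]
  have hQM : Q * (A - B) = D + E := by
    rw [hMdec, Matrix.mul_add, ← Matrix.mul_assoc, hQX, hPD, hEdef, Matrix.mul_assoc]
  -- trace manipulations
  have hMt : (A - B)ᵀ = A - B := by
    have hAt : Aᵀ = A := by rw [← conjT]; exact hA.1
    have hBt : Bᵀ = B := by rw [← conjT]; exact hB.1
    rw [transpose_sub, hAt, hBt]
  have hRHS : ((A - B) ^ 2 * Ap).trace = ((Q * (A - B))ᵀ * (Q * (A - B))).trace := by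
    have h1 : (Q * (A - B))ᵀ * (Q * (A - B)) = (A - B) * Q * (Q * (A - B)) := by
      rw [transpose_mul, hQt, hMt]
    rw [h1, hApEq, ← hQQ, pow_two]
    calc ((A - B) * (A - B) * (Q * Q)).trace
        = ((A - B) * ((A - B) * (Q * Q))).trace := by rw [Matrix.mul_assoc]
      _ = (((A - B) * (Q * Q)) * (A - B)).trace := Matrix.trace_mul_comm _ _
      _ = ((A - B) * Q * (Q * (A - B))).trace := by
          rw [Matrix.mul_assoc, Matrix.mul_assoc, Matrix.mul_assoc]
  rw [hRHS, hQM]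
  -- expand the square
  have hexp2 : ((D + E)ᵀ * (D + E)).trace
      = (Dᵀ * D).trace + ((Dᵀ * E).trace + (Eᵀ * D).trace + (Eᵀ * E).trace) := by
    rw [transpose_add, Matrix.add_mul, Matrix.mul_add, Matrix.mul_add]
    rw [Matrix.trace_add, Matrix.trace_add, Matrix.trace_add]
    ring
  rw [hexp2]
  have hDD : (Dᵀ * D).trace = ((posSemidefSqrt hA - posSemidefSqrt hB) ^ 2).trace := by
    rw [hDt, pow_two, hDdef]
  rw [hDD]
  have hED : (Eᵀ * D).trace = (Dᵀ * E).trace := by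
    rw [← Matrix.trace_transpose (Eᵀ * D), transpose_mul, transpose_transpose]
  have hDE : 0 ≤ (Dᵀ * E).trace := by
    have h1 : Dᵀ * E = (D * Q * D) * Y := by
      rw [hDt, hEdef]
      simp only [Matrix.mul_assoc]
    rw [h1]
    apply trace_mul_nonneg _ (mpsqrt_psd hB)
    have h2 := hQpsd.conjTranspose_mul_mul_same D
    rwa [conjT, hDt] at h2
  have hEE : 0 ≤ (Eᵀ * E).trace := by
    have h := Matrix.posSemidef_conjTranspose_mul_self E
    rw [conjT] at h
    exact trace_nonneg h
  linarith
end

section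
/- Let τ be a stopping time (with respect to a filtration F_t) taking values in [0,∞], and suppose β > 0 is such that for every t ≥ 0, E[τ | F_t] ≤ t + β² almost surely. Then for every natural number i, P(τ ≥ 2iβ²) ≤ 2^{−i}. -/
open MeasureTheory ProbabilityTheory

/-- If a nonnegative stopping time `τ` satisfies `E[τ | F_t] ≤ t + β²` a.s. for every
`t ≥ 0`, then `P(τ ≥ 2iβ²) ≤ 2⁻ⁱ` for every natural `i`. -/
theorem stmt9 {Ω : Type*} {m0 : MeasurableSpace Ω} (μ : Measure Ω) [IsProbabilityMeasure μ]
    (ℱ : Filtration ℝ m0) (τ : Ω → ℝ) (β : ℝ) (hβ : 0 < β)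
    (hτ : IsStoppingTime ℱ (fun ω => (τ ω : WithTop ℝ))) (hτ0 : ∀ ω, 0 ≤ τ ω) (hτint : Integrable τ μ)
    (hcond : ∀ t : ℝ, 0 ≤ t → μ[τ|ℱ t] ≤ᵐ[μ] fun _ => t + β ^ 2) :
    ∀ i : ℕ, μ {ω | 2 * i * β ^ 2 ≤ τ ω} ≤ (1 / 2 : ENNReal) ^ i := by
  set t : ℕ → ℝ := fun i => 2 * i * β ^ 2 with ht
  have hβ2 : 0 < β ^ 2 := by positivity
  have htnn : ∀ i : ℕ, 0 ≤ t i := by intro i; positivity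
  set A : ℕ → Set Ω := fun i => {ω | t i ≤ τ ω} with hA
  have hAmeas : ∀ i, MeasurableSet[ℱ (t i)] (A i) := fun i => by simpa [hA] using hτ.measurableSet_ge (t i)
  have hAmeas0 : ∀ i, MeasurableSet (A i) := fun i => ℱ.le _ _ (hAmeas i)
  have hAfin : ∀ i, μ (A i) ≠ ⊤ := fun i => measure_ne_top μ _
  -- key step: μ (A (i+1)) ≤ 1/2 * μ (A i)
  have key : ∀ i : ℕ, (μ (A (i + 1))).toReal ≤ (1 / 2) * (μ (A i)).toReal := by
    intro i
    have hsub : A (i + 1) ⊆ A i := by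
      intro ω hω
      have : t i ≤ t (i + 1) := by
        simp only [ht]
        have : (i : ℝ) ≤ (i : ℝ) + 1 := by linarith
        push_cast; nlinarith
      exact le_trans this hω
    set f : Ω → ℝ := fun ω => τ ω - t i with hf
    have hfint : Integrable f μ := hτint.sub (integrable_const _)
    -- ∫ f over A (i+1) ≥ 2β² * μ(A (i+1))
    have h1 : (μ (A (i + 1))).toReal * (2 * β ^ 2) ≤ ∫ ω in A (i + 1), f ω ∂μ := by
      have := setIntegral_mono_on (integrableOn_const)
        (hfint.integrableOn) (hAmeas0 (i + 1))
        (fun ω hω => ?_ : ∀ ω ∈ A (i+1), (2 * β ^ 2) ≤ f ω)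
      · simpa [setIntegral_const, smul_eq_mul, measureReal_def] using this
      · have hω' : t (i + 1) ≤ τ ω := hω
        have : t (i + 1) = t i + 2 * β ^ 2 := by simp only [ht]; push_cast; ring
        simp only [hf]; linarith [hω', this ▸ hω']
    -- ∫ f over A (i+1) ≤ ∫ f over A i
    have h2 : ∫ ω in A (i + 1), f ω ∂μ ≤ ∫ ω in A i, f ω ∂μ := by
      apply setIntegral_mono_set hfint.integrableOn
      · filter_upwards [ae_restrict_mem (hAmeas0 i)] with ω hω
        have : t i ≤ τ ω := hω
        simp only [hf, Pi.zero_apply]; linarith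
      · exact Filter.Eventually.of_forall hsub
    -- ∫ f over A i ≤ β² * μ(A i)
    have h3 : ∫ ω in A i, f ω ∂μ ≤ (μ (A i)).toReal * β ^ 2 := by
      have heq : ∫ ω in A i, τ ω ∂μ = ∫ ω in A i, (μ[τ|ℱ (t i)]) ω ∂μ :=
        (setIntegral_condExp (ℱ.le (t i)) hτint (hAmeas i)).symm
      have hle : ∫ ω in A i, (μ[τ|ℱ (t i)]) ω ∂μ ≤ ∫ ω in A i, (t i + β ^ 2) ∂μ := by
        apply setIntegral_mono_ae integrable_condExp.integrableOn
          (integrableOn_const)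
        exact hcond (t i) (htnn i)
      have hconst : ∫ ω in A i, (t i + β ^ 2) ∂μ = (μ (A i)).toReal * (t i + β ^ 2) := by
        simp [setIntegral_const, smul_eq_mul, measureReal_def]
      have hsplit : ∫ ω in A i, f ω ∂μ = (∫ ω in A i, τ ω ∂μ) - (μ (A i)).toReal * t i := by
        simp only [hf]
        rw [integral_sub hτint.integrableOn
          (integrableOn_const)]
        simp [setIntegral_const, smul_eq_mul, measureReal_def]
      rw [hsplit]
      have := heq ▸ hle
      rw [hconst] at this
      linarith
    have hnn : 0 ≤ (μ (A (i + 1))).toReal := ENNReal.toReal_nonneg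
    nlinarith [h1.trans (h2.trans h3)]
  intro i
  induction i with
  | zero => simpa using prob_le_one
  | succ i ih =>
    have h1 : μ (A (i + 1)) ≤ (1 / 2 : ENNReal) * μ (A i) := by
      rw [← ENNReal.ofReal_toReal (hAfin (i + 1)), ← ENNReal.ofReal_toReal (hAfin i)]
      rw [show ((1:ENNReal)/2) = ENNReal.ofReal (1/2) by
        rw [ENNReal.ofReal_div_of_pos] <;> simp]
      rw [← ENNReal.ofReal_mul (by norm_num)]
      exact ENNReal.ofReal_le_ofReal (key i)
    calc μ (A (i + 1)) ≤ (1 / 2 : ENNReal) * μ (A i) := h1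
      _ ≤ (1 / 2 : ENNReal) * (1 / 2) ^ i := by
          exact mul_le_mul_right ih _
      _ = (1 / 2 : ENNReal) ^ (i + 1) := by ring
end
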